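/- Let ∇ ⊂ ℝ⁴ be the convex hull of the seven 0-1 vectors (0,0,0,0), (1,1,0,0), (1,0,1,0), (0,1,1,1), (1,1,1,0), (0,1,0,0), (0,0,1,0). Then ∇ equals the set of points (x,y,z,w) ∈ ℝ⁴ satisfying w ≥ 0, x ≥ 0, y ≤ 1, z ≤ 1, x - y - z + 2w ≤ 0, x - y - z + w ≥ -1, x + w ≤ 1, w ≤ y, w ≤ z, and these seven points are exactly the lattice points of ∇. -/
import Mathlib

open Pointwise

def pts : Set (ℝ × ℝ × ℝ × ℝ) :=
  {(0, 0, 0, 0), (1, 1, 0, 0), (1, 0, 1, 0), (0, 1, 1, 1), (1, 1, 1, 0),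
    (0, 1, 0, 0), (0, 0, 1, 0)}

def nabla : Set (ℝ × ℝ × ℝ × ℝ) :=
  {p : ℝ × ℝ × ℝ × ℝ |
    0 ≤ p.2.2.2 ∧
    0 ≤ p.1 ∧
    p.2.1 ≤ 1 ∧
    p.2.2.1 ≤ 1 ∧
    p.1 - p.2.1 - p.2.2.1 + 2 * p.2.2.2 ≤ 0 ∧
    -1 ≤ p.1 - p.2.1 - p.2.2.1 + p.2.2.2 ∧
    p.1 + p.2.2.2 ≤ 1 ∧
    p.2.2.2 ≤ p.2.1 ∧
    p.2.2.2 ≤ p.2.2.1}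

lemma comb_mem (x y z w c0 c1 c2 c3 c4 c5 c6 : ℝ)
    (h0 : 0 ≤ c0) (h1 : 0 ≤ c1) (h2 : 0 ≤ c2) (h3 : 0 ≤ c3) (h4 : 0 ≤ c4)
    (h5 : 0 ≤ c5) (h6 : 0 ≤ c6)
    (hs : c0 + c1 + c2 + c3 + c4 + c5 + c6 = 1)
    (hx : x = c1 + c2 + c4) (hy : y = c1 + c3 + c4 + c5)
    (hz : z = c2 + c3 + c4 + c6) (hw : w = c3) :
    ((x, y, z, w) : ℝ × ℝ × ℝ × ℝ) ∈ convexHull ℝ pts := by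
  set cs : Fin 7 → ℝ := ![c0, c1, c2, c3, c4, c5, c6] with hcs
  set vs : Fin 7 → ℝ × ℝ × ℝ × ℝ :=
    ![(0, 0, 0, 0), (1, 1, 0, 0), (1, 0, 1, 0), (0, 1, 1, 1),
      (1, 1, 1, 0), (0, 1, 0, 0), (0, 0, 1, 0)] with hvs
  have key : (∑ i : Fin 7, cs i • vs i) ∈ convexHull ℝ pts := by
    apply (convex_convexHull ℝ pts).sum_mem
    · intro i _; fin_cases i <;> assumption
    · rw [Fin.sum_univ_seven]
      show c0 + c1 + c2 + c3 + c4 + c5 + c6 = 1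
      exact hs
    · intro i _
      fin_cases i
      · exact subset_convexHull ℝ pts (show ((0:ℝ),(0:ℝ),(0:ℝ),(0:ℝ)) ∈ pts by norm_num [pts])
      · exact subset_convexHull ℝ pts (show ((1:ℝ),(1:ℝ),(0:ℝ),(0:ℝ)) ∈ pts by norm_num [pts])
      · exact subset_convexHull ℝ pts (show ((1:ℝ),(0:ℝ),(1:ℝ),(0:ℝ)) ∈ pts by norm_num [pts])
      · exact subset_convexHull ℝ pts (show ((0:ℝ),(1:ℝ),(1:ℝ),(1:ℝ)) ∈ pts by norm_num [pts])
      · exact subset_convexHull ℝ pts (show ((1:ℝ),(1:ℝ),(1:ℝ),(0:ℝ)) ∈ pts by norm_num [pts])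
      · exact subset_convexHull ℝ pts (show ((0:ℝ),(1:ℝ),(0:ℝ),(0:ℝ)) ∈ pts by norm_num [pts])
      · exact subset_convexHull ℝ pts (show ((0:ℝ),(0:ℝ),(1:ℝ),(0:ℝ)) ∈ pts by norm_num [pts])
  have hsum : (∑ i : Fin 7, cs i • vs i) =
      (c1 + c2 + c4, c1 + c3 + c4 + c5, c2 + c3 + c4 + c6, c3) := by
    rw [Fin.sum_univ_seven]
    show c0 • ((0:ℝ), (0:ℝ), (0:ℝ), (0:ℝ)) + c1 • (1, 1, 0, 0) + c2 • (1, 0, 1, 0)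
        + c3 • (0, 1, 1, 1) + c4 • (1, 1, 1, 0) + c5 • (0, 1, 0, 0) + c6 • (0, 0, 1, 0) = _
    simp [Prod.ext_iff, Prod.smul_mk]
  rw [hsum] at key
  rw [hx, hy, hz, hw]
  exact key

lemma convex_nabla : Convex ℝ nabla := by
  rintro ⟨px, py, pz, pw⟩ hp ⟨qx, qy, qz, qw⟩ hq a b ha hb hab
  obtain ⟨p1, p2, p3, p4, p5, p6, p7, p8, p9⟩ := hp
  obtain ⟨q1, q2, q3, q4, q5, q6, q7, q8, q9⟩ := hq
  simp only [nabla, Set.mem_setOf_eq, Prod.smul_mk, Prod.mk_add_mk, smul_eq_mul] at *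
  refine ⟨?_, ?_, ?_, ?_, ?_, ?_, ?_, ?_, ?_⟩ <;>
    linarith [mul_nonneg ha p1, mul_nonneg hb q1, mul_nonneg ha p2, mul_nonneg hb q2,
      mul_le_mul_of_nonneg_left p3 ha, mul_le_mul_of_nonneg_left q3 hb,
      mul_le_mul_of_nonneg_left p4 ha, mul_le_mul_of_nonneg_left q4 hb,
      mul_le_mul_of_nonneg_left p5 ha, mul_le_mul_of_nonneg_left q5 hb,
      mul_le_mul_of_nonneg_left p6 ha, mul_le_mul_of_nonneg_left q6 hb,
      mul_le_mul_of_nonneg_left p7 ha, mul_le_mul_of_nonneg_left q7 hb,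
      mul_le_mul_of_nonneg_left p8 ha, mul_le_mul_of_nonneg_left q8 hb,
      mul_le_mul_of_nonneg_left p9 ha, mul_le_mul_of_nonneg_left q9 hb]

theorem stmt19 :
    convexHull ℝ pts = nabla ∧
      {v : ℤ × ℤ × ℤ × ℤ | (((v.1 : ℝ), (v.2.1 : ℝ), (v.2.2.1 : ℝ), (v.2.2.2 : ℝ)) : ℝ × ℝ × ℝ × ℝ) ∈ nabla}
        = {(0, 0, 0, 0), (1, 1, 0, 0), (1, 0, 1, 0), (0, 1, 1, 1), (1, 1, 1, 0),
            (0, 1, 0, 0), (0, 0, 1, 0)} := by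
  constructor
  · apply Set.Subset.antisymm
    · apply convexHull_min _ convex_nabla
      intro p hp
      simp only [pts, Set.mem_insert_iff, Set.mem_singleton_iff] at hp
      rcases hp with rfl | rfl | rfl | rfl | rfl | rfl | rfl <;> norm_num [nabla]
    · rintro ⟨x, y, z, w⟩ ⟨h1, h2, h3, h4, h5, h6, h7, h8, h9⟩
      simp only at h1 h2 h3 h4 h5 h6 h7 h8 h9
      rcases le_total (y + z - w - 1) 0 with hA | hB
      · rcases le_total x (y - w) with hx1 | hx2
        · exact comb_mem x y z w (1 - y - z + w) x 0 w 0 (y - w - x) (z - w)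
            (by linarith) (by linarith) le_rfl h1 le_rfl (by linarith) (by linarith)
            (by ring) (by ring) (by ring) (by ring) rfl
        · exact comb_mem x y z w (1 - y - z + w) (y - w) (x - y + w) w 0 0 (y + z - x - 2 * w)
            (by linarith) (by linarith) (by linarith) h1 le_rfl le_rfl (by linarith)
            (by ring) (by ring) (by ring) (by ring) rfl
      · rcases le_total x (y - w) with hx1 | hx2
        · exact comb_mem x y z w 0 (x - y - z + w + 1) 0 w (y + z - w - 1) (y - w - x) (1 - y)
            le_rfl (by linarith) le_rfl h1 (by linarith) (by linarith) (by linarith)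
            (by ring) (by ring) (by ring) (by ring) rfl
        · exact comb_mem x y z w 0 (1 - z) (x - y + w) w (y + z - w - 1) 0 (1 - x - w)
            le_rfl (by linarith) (by linarith) h1 (by linarith) le_rfl (by linarith)
            (by ring) (by ring) (by ring) (by ring) rfl
  · ext ⟨a, b, c, d⟩
    simp only [Set.mem_setOf_eq, nabla, Set.mem_insert_iff, Set.mem_singleton_iff,
      Prod.mk.injEq]
    constructor
    · rintro ⟨h1, h2, h3, h4, h5, h6, h7, h8, h9⟩
      have H1 : (0 : ℤ) ≤ d := by exact_mod_cast h1
      have H2 : (0 : ℤ) ≤ a := by exact_mod_cast h2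
      have H3 : b ≤ (1 : ℤ) := by exact_mod_cast h3
      have H4 : c ≤ (1 : ℤ) := by exact_mod_cast h4
      have H5 : (a : ℤ) - b - c + 2 * d ≤ 0 := by exact_mod_cast h5
      have H6 : (-1 : ℤ) ≤ a - b - c + d := by exact_mod_cast h6
      have H7 : (a : ℤ) + d ≤ 1 := by exact_mod_cast h7
      have H8 : (d : ℤ) ≤ b := by exact_mod_cast h8
      have H9 : (d : ℤ) ≤ c := by exact_mod_cast h9
      omega
    · rintro (⟨rfl, rfl, rfl, rfl⟩ | ⟨rfl, rfl, rfl, rfl⟩ | ⟨rfl, rfl, rfl, rfl⟩ |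
        ⟨rfl, rfl, rfl, rfl⟩ | ⟨rfl, rfl, rfl, rfl⟩ | ⟨rfl, rfl, rfl, rfl⟩ |
        ⟨rfl, rfl, rfl, rfl⟩) <;> norm_num
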